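/- Let M be a mapping modeling and let M⁺ be the structure obtained from M by marking exactly one element of its domain with a new unary relation (keeping the same domain, measure and function). Then: (1) M⁺ is a modeling; (2) M⁺ satisfies the finitary mass transport principle if and only if M does; (3) M⁺ has the finite model property if and only if M does. -/

import Mathlib

open FirstOrder Language Filter Topology Set
open MeasureTheory (Measure IsProbabilityMeasure)
open scoped ENNReal NNReal

namespace MapApprox

/-- The mapping signature: one unary function symbol and `c` unary relation symbols. -/
def mapLang (c : ℕ) : FirstOrder.Language :=
  ⟨fun n => match n with | 1 => Unit | _ => Empty,
   fun n => match n with | 1 => Fin c | _ => Empty⟩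

/-- The unary function symbol. -/
def fsym (c : ℕ) : (mapLang c).Functions 1 := Unit.unit

/-- The `k`-th unary relation symbol. -/
def rsym (c : ℕ) (k : Fin c) : (mapLang c).Relations 1 := k

/-- The interpretation of the function symbol in a mapping. -/
def fmap (c : ℕ) (M : Type*) [(mapLang c).Structure M] : M → M :=
  fun x => Structure.funMap (fsym c) ![x]

/-- The interpretation of the `k`-th unary relation in a mapping. -/
def relP (c : ℕ) {M : Type*} [(mapLang c).Structure M] (k : Fin c) (x : M) : Prop :=
  Structure.RelMap (rsym c k) ![x]

/-- The Stone pairing of a formula with a structure equipped with a probability measure. -/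
noncomputable def modPairing (c p : ℕ) (M : Type*) [MeasurableSpace M]
    [(mapLang c).Structure M] (ν : Measure M) (φ : (mapLang c).Formula (Fin p)) : ℝ :=
  ((Measure.pi fun _ : Fin p => ν) {v : Fin p → M | φ.Realize v}).toReal

/-- The Stone pairing of a formula with a finite structure (uniform measure). -/
noncomputable def finPairing (c p : ℕ) (F : Type*) [Fintype F]
    [(mapLang c).Structure F] (φ : (mapLang c).Formula (Fin p)) : ℝ :=
  (Set.ncard {v : Fin p → F | φ.Realize v} : ℝ) / (Fintype.card F : ℝ) ^ p

/-- A structure on a measurable space is a modeling if every definable set is measurable. -/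
def IsModeling (c : ℕ) (M : Type*) [MeasurableSpace M] [(mapLang c).Structure M] : Prop :=
  ∀ (p : ℕ) (φ : (mapLang c).Formula (Fin p)), MeasurableSet {v : Fin p → M | φ.Realize v}

/-- A measure is atomless if every singleton has measure zero. -/
def Atomless {M : Type*} [MeasurableSpace M] (ν : Measure M) : Prop :=
  ∀ v : M, ν {v} = 0

/-- The Finitary Mass Transport Principle for a map `f` and a measure `ν`. -/
def FMTP {X : Type*} [MeasurableSpace X] (f : X → X) (ν : Measure X) : Prop :=
  ν {x | (f ⁻¹' {x}).Infinite} = 0 ∧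
    ∀ A B : Set X, MeasurableSet A → MeasurableSet B →
      A ⊆ {x | (f ⁻¹' {x}).Finite} → B ⊆ {x | (f ⁻¹' {x}).Finite} →
      ν (A ∩ f ⁻¹' B) = ∫⁻ y in B, ((f ⁻¹' {y} ∩ A).encard : ℝ≥0∞) ∂ν

/-- The finite model property: every sentence satisfied by `M` has a finite model. -/
def HasFMP (c : ℕ) (M : Type*) [(mapLang c).Structure M] : Prop :=
  ∀ θ : (mapLang c).Sentence, Sentence.Realize M θ →
    ∃ (F : Type) (st : (mapLang c).Structure F), Finite F ∧ @Sentence.Realize _ F st θ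

/-- A bundled mapping modeling. -/
structure MMod (c : ℕ) where
  carrier : Type
  [ms : MeasurableSpace carrier]
  [sb : StandardBorelSpace carrier]
  [st : (mapLang c).Structure carrier]
  ν : Measure carrier
  prob : IsProbabilityMeasure ν
  borel : IsModeling c carrier

attribute [instance] MMod.ms MMod.sb MMod.st

/-- A bundled finite mapping. -/
structure FinMapping (c : ℕ) where
  carrier : Type
  [fin : Fintype carrier]
  [st : (mapLang c).Structure carrier]

attribute [instance] FinMapping.fin FinMapping.st

/-- `x` belongs to the `r`-ball of `u` in the Gaifman graph of a mapping with function `f`. -/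
def ballMem {M : Type*} (f : M → M) (r : ℕ) (u x : M) : Prop :=
  ∃ a b : ℕ, a + b ≤ r ∧ f^[a] u = f^[b] x

/-- The union of the `r`-balls around the entries of a tuple. -/
def tupleBall {M : Type*} {p : ℕ} (f : M → M) (r : ℕ) (u : Fin p → M) : Set M :=
  {x | ∃ i, ballMem f r (u i) x}

/-- `g` is an isomorphism between the `r`-balls of the tuples `u` and `v`. -/
def BallIso (c : ℕ) {p : ℕ} (r : ℕ) (M N : Type*)
    [(mapLang c).Structure M] [(mapLang c).Structure N]
    (u : Fin p → M) (v : Fin p → N) (g : M → N) : Prop :=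
  Set.BijOn g (tupleBall (fmap c M) r u) (tupleBall (fmap c N) r v) ∧
    (∀ i, g (u i) = v i) ∧
    (∀ x ∈ tupleBall (fmap c M) r u, ∀ k : Fin c, (relP c k x ↔ relP c k (g x))) ∧
    (∀ x ∈ tupleBall (fmap c M) r u, ∀ y ∈ tupleBall (fmap c M) r u,
      (fmap c M x = y ↔ fmap c N (g x) = g y))

/-- A formula is `r`-local if its satisfaction only depends on the isomorphism type of the
`r`-balls around its free variables. -/
def IsRLocal (c p : ℕ) (r : ℕ) (φ : (mapLang c).Formula (Fin p)) : Prop :=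
  ∀ (M N : Type) [(mapLang c).Structure M] [(mapLang c).Structure N]
    (u : Fin p → M) (v : Fin p → N) (g : M → N),
    BallIso c r M N u v g → (φ.Realize u ↔ φ.Realize v)

/-- A formula is local if it is `r`-local for some `r`. -/
def IsLocalFormula (c p : ℕ) (φ : (mapLang c).Formula (Fin p)) : Prop :=
  ∃ r, IsRLocal c p r φ

/-- A term is clean if it involves no composition of function symbols. -/
def TermClean {c : ℕ} {α : Type*} : (mapLang c).Term α → Prop
  | FirstOrder.Language.Term.var _ => True
  | FirstOrder.Language.Term.func _ ts => ∀ i, ∃ a, ts i = FirstOrder.Language.Term.var a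

/-- A formula is clean if all its terms are clean. -/
def FormulaClean {c : ℕ} {α : Type*} :
    ∀ {n : ℕ}, (mapLang c).BoundedFormula α n → Prop
  | _, FirstOrder.Language.BoundedFormula.falsum => True
  | _, FirstOrder.Language.BoundedFormula.equal t₁ t₂ => TermClean t₁ ∧ TermClean t₂
  | _, FirstOrder.Language.BoundedFormula.rel _ ts => ∀ i, TermClean (ts i)
  | _, FirstOrder.Language.BoundedFormula.imp φ ψ => FormulaClean φ ∧ FormulaClean ψ
  | _, FirstOrder.Language.BoundedFormula.all φ => FormulaClean φ

/-- The number of nested quantifiers of a formula. -/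
def qdepth {c : ℕ} {α : Type*} : ∀ {n : ℕ}, (mapLang c).BoundedFormula α n → ℕ
  | _, FirstOrder.Language.BoundedFormula.falsum => 0
  | _, FirstOrder.Language.BoundedFormula.equal _ _ => 0
  | _, FirstOrder.Language.BoundedFormula.rel _ _ => 0
  | _, FirstOrder.Language.BoundedFormula.imp φ ψ => max (qdepth φ) (qdepth ψ)
  | _, FirstOrder.Language.BoundedFormula.all φ => qdepth φ + 1

/-- The quantifier rank of a formula: the least number of nested quantifiers of a clean formula
logically equivalent to it. -/
noncomputable def qrank {c : ℕ} {α : Type*} (φ : (mapLang c).Formula α) : ℕ :=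
  sInf {d | ∃ ψ : (mapLang c).Formula α, FormulaClean ψ ∧ qdepth ψ ≤ d ∧
    ∀ (M : Type) [(mapLang c).Structure M] (w : α → M), (φ.Realize w ↔ ψ.Realize w)}

/-- `M ≡_r N` : `M` and `N` satisfy the same sentences of quantifier rank at most `r`. -/
def ElemEquiv (c r : ℕ) (M N : Type*) [(mapLang c).Structure M] [(mapLang c).Structure N] :
    Prop :=
  ∀ θ : (mapLang c).Sentence, qrank θ ≤ r →
    (Sentence.Realize M θ ↔ Sentence.Realize N θ)

/-- `dist_p^r(M,N)`: the supremum of `|⟨φ,M⟩ - ⟨φ,N⟩|` over formulas `φ` with `p` free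
variables and quantifier rank at most `r`. -/
noncomputable def distPR (c p r : ℕ) (M N : Type*) [MeasurableSpace M] [MeasurableSpace N]
    [(mapLang c).Structure M] [(mapLang c).Structure N]
    (νM : Measure M) (νN : Measure N) : ℝ :=
  ⨆ φ : {φ : (mapLang c).Formula (Fin p) // qrank φ ≤ r},
    |modPairing c p M νM φ.1 - modPairing c p N νN φ.1|

/-- `ldist_p^r(M,N)`: the supremum of `|⟨φ,M⟩ - ⟨φ,N⟩|` over local formulas `φ` with `p` free
variables and local rank at most `r`. -/
noncomputable def ldistPR (c p r : ℕ) (M N : Type*) [MeasurableSpace M] [MeasurableSpace N]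
    [(mapLang c).Structure M] [(mapLang c).Structure N]
    (νM : Measure M) (νN : Measure N) : ℝ :=
  ⨆ φ : {φ : (mapLang c).Formula (Fin p) // IsRLocal c p r φ},
    |modPairing c p M νM φ.1 - modPairing c p N νN φ.1|

/-- The Stone pairing of the formula `dist(x₁,x₂) ≤ r` with a modeling. -/
noncomputable def deltaPairing (c r : ℕ) (M : Type*) [MeasurableSpace M]
    [(mapLang c).Structure M] (ν : Measure M) : ℝ :=
  ((Measure.pi fun _ : Fin 2 => ν)
    {v : Fin 2 → M | ballMem (fmap c M) r (v 0) (v 1)}).toReal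

end MapApprox

namespace MapApprox

open FirstOrder Language Filter Topology Set
open MeasureTheory (Measure IsProbabilityMeasure)
open scoped ENNReal

/-! ### Local types -/

/-- A set of formulas in one free variable, thought of as a candidate local type. -/
abbrev TypeSet (c : ℕ) := Set ((mapLang c).Formula (Fin 1))

/-- The rank-`r` local type of an element: the set of `r`-local formulas it satisfies. -/
def localTypeOf (c r : ℕ) (M : Type*) [(mapLang c).Structure M] (x : M) : TypeSet c :=
  {φ | IsRLocal c 1 r φ ∧ φ.Realize (fun _ => x)}

/-- A set of formulas is a rank-`r` local type if it is realized in some mapping. -/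
def IsLocalType (c r : ℕ) (T : TypeSet c) : Prop :=
  ∃ (M : Type) (_ : (mapLang c).Structure M) (x : M), T = localTypeOf c r M x

/-- The projection of a local type to its rank-`r` part. -/
def projType (c r : ℕ) (T : TypeSet c) : TypeSet c :=
  {φ | φ ∈ T ∧ IsRLocal c 1 r φ}

/-- `admPlus c R r τ t = 1` iff the rank-`R` local type `τ` of an element forces its image to
have rank-`r` local type `t`, and `0` otherwise. -/
noncomputable def admPlus (c R r : ℕ) (τ t : TypeSet c) : ℕ :=
  letI := Classical.propDecidable
  if (∀ (M : Type) [(mapLang c).Structure M] (x : M),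
      localTypeOf c R M x = τ → localTypeOf c r M (fmap c M x) = t) then 1 else 0

/-- `admMinus c R r τ t` : the largest `a ≤ r+1` such that the rank-`R` local type `τ` of an
element forces it to have at least `a` preimages of rank-`r` local type `t`. -/
noncomputable def admMinus (c R r : ℕ) (τ t : TypeSet c) : ℕ :=
  sSup {a : ℕ | a ≤ r + 1 ∧ ∀ (M : Type) [(mapLang c).Structure M] (x : M),
    localTypeOf c R M x = τ →
      (a : ℕ∞) ≤ ({u : M | fmap c M u = x ∧ localTypeOf c r M u = t}).encard}

/-- The `(R,r)`-restricted finitary mass transport principle for a (finitely supported)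
probability distribution `ρ` on rank-`R` local types. -/
def RestrictedFMTP (c R r : ℕ) (ρ : TypeSet c → ℝ) : Prop :=
  ∃ s : TypeSet c → TypeSet c → ℝ,
    (∀ τ t, 0 < ρ τ → (∃ τ', 0 < ρ τ' ∧ projType c r τ' = t) →
      (((∃ k : ℕ, k ≤ r ∧ s τ t = (k : ℝ)) ∨ (r : ℝ) < s τ t) ∧
        min (r : ℝ) (admMinus c R r τ t : ℝ) = min (r : ℝ) (s τ t))) ∧
    ∀ t₁ t₂ : TypeSet c,
      (∃ τ, 0 < ρ τ ∧ projType c r τ = t₁) → (∃ τ, 0 < ρ τ ∧ projType c r τ = t₂) →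
      (∑ᶠ τ₁ ∈ {τ | 0 < ρ τ ∧ projType c r τ = t₁}, (admPlus c R r τ₁ t₂ : ℝ) * ρ τ₁) =
      (∑ᶠ τ₂ ∈ {τ | 0 < ρ τ ∧ projType c r τ = t₂}, s τ₂ t₁ * ρ τ₂)

/-! ### Atomic formulas -/

/-- The formula `f^ℓ(x) = x`. -/
def iterEqFormula (c : ℕ) (ℓ : ℕ) : (mapLang c).Formula (Fin 1) :=
  Term.equal ((fun t => Functions.apply₁ (fsym c) t)^[ℓ] (Term.var (0 : Fin 1)))
    (Term.var (0 : Fin 1))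

/-- The atomic formula `M_k(x)`. -/
def relFormula (c : ℕ) (k : Fin c) : (mapLang c).Formula (Fin 1) :=
  Relations.formula₁ (rsym c k) (Term.var (0 : Fin 1))

/-! ### Restrictions, marking, and miscellaneous definitions -/

/-- The subset of a structure defined by a formula with one free variable. -/
def defSet (c : ℕ) (M : Type*) [(mapLang c).Structure M] (φ : (mapLang c).Formula (Fin 1)) :
    Set M := {x | φ.Realize (fun _ => x)}

/-- The function of the restriction of a mapping to a subset `X`. -/
noncomputable def restrictFun (c : ℕ) (M : Type*) [(mapLang c).Structure M] (X : Set M) :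
    X → X := fun v =>
  letI := Classical.propDecidable
  if h : fmap c M v.1 ∈ X then ⟨fmap c M v.1, h⟩ else v

/-- The normalized restriction of a measure to a subset. -/
noncomputable def restrictMeasure {M : Type*} [MeasurableSpace M] (ν : Measure M) (X : Set M) :
    Measure X := (ν X)⁻¹ • MeasureTheory.Measure.comap Subtype.val ν

/-- Marking one element `m` with a new unary relation: the resulting structure for the
signature with one extra unary relation. -/
def extStructure (c : ℕ) (M : Type*) [(mapLang c).Structure M] (m : M) :
    (mapLang (c + 1)).Structure M where
  funMap {n} f v :=
    match n, f, v with
    | 1, _, v => fmap c M (v 0)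
  RelMap {n} k v :=
    match n, k, v with
    | 1, k, v =>
        letI := Classical.propDecidable
        let k' : Fin (c + 1) := k
        if h : (k' : ℕ) < c then relP c ⟨(k' : ℕ), h⟩ (v 0) else v 0 = m

/-- A mapping is connected when any two elements are joined in the Gaifman graph. -/
def ConnectedMap {M : Type*} (f : M → M) : Prop :=
  ∀ u v : M, ∃ a b : ℕ, f^[a] u = f^[b] v

/-- The set of vertices lying on an undirected path of length at least `d+1` with endpoint
`rt` in the digraph `E`. -/
def pathSet {M : Type*} (E : M → M → Prop) (rt : M) (d : ℕ) : Set M :=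
  {x | ∃ (n : ℕ) (w : ℕ → M), d + 1 ≤ n ∧ w 0 = rt ∧
    (∀ i ≤ n, ∀ j ≤ n, w i = w j → i = j) ∧
    (∀ i < n, E (w i) (w (i + 1)) ∨ E (w (i + 1)) (w i)) ∧
    ∃ i ≤ n, w i = x}

/-- `E(u)`: the set of iterated preimages of `u`. -/
def iterPreimages {L : Type*} (f : L → L) (u : L) : Set L :=
  ⋃ k ∈ {k : ℕ | 1 ≤ k}, (f^[k]) ⁻¹' {u}

end MapApprox

namespace MapApprox

open FirstOrder Language Filter Topology Set
open MeasureTheory (Measure IsProbabilityMeasure)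
open scoped ENNReal


def trTerm (c : ℕ) {β : Type*} : (mapLang (c+1)).Term β → (mapLang c).Term β
  | Term.var a => Term.var a
  | @Term.func _ _ 1 _ ts => Term.func (fsym c) fun i => trTerm c (ts i)
  | @Term.func _ _ 0 f _ => Empty.elim f
  | @Term.func _ _ (_+2) f _ => Empty.elim f

lemma fin1_eq {M : Type*} (w : Fin 1 → M) : w = ![w 0] :=
  funext (Fin.cases rfl (fun i => i.elim0))

lemma realize_trTerm (c : ℕ) {M : Type*} [st : (mapLang c).Structure M] (m : M)
    {β : Type*} (v : β → M) (t : (mapLang (c+1)).Term β) :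
    Term.realize v (trTerm c t) = @Term.realize _ M (extStructure c M m) _ v t := by
  induction t with
  | var => rfl
  | @func l f ts ih =>
    match l, f, ts, ih with
    | 0, f, _, _ => exact Empty.elim f
    | (n+2), f, _, _ => exact Empty.elim f
    | 1, f, ts, ih =>
      show Structure.funMap (fsym c) _ = fmap c M _
      rw [fmap]
      congr 1
      rw [fin1_eq (fun i => Term.realize v (trTerm c (ts i)))]
      rw [ih 0]


def trBF (c : ℕ) {α : Type*} : ∀ {n : ℕ}, (mapLang (c+1)).BoundedFormula α n →
    (mapLang c).BoundedFormula (α ⊕ Fin 1) n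
  | _, BoundedFormula.falsum => BoundedFormula.falsum
  | _, BoundedFormula.equal t₁ t₂ =>
      BoundedFormula.equal ((trTerm c t₁).relabel (Sum.map Sum.inl id))
        ((trTerm c t₂).relabel (Sum.map Sum.inl id))
  | _, @BoundedFormula.rel _ _ _ 1 R ts =>
      if h : (R : Fin (c+1)).val < c then
        BoundedFormula.rel (l := 1) (⟨(R : Fin (c+1)).val, h⟩ : Fin c)
          (fun i => (trTerm c (ts i)).relabel (Sum.map Sum.inl id))
      else
        BoundedFormula.equal ((trTerm c (ts 0)).relabel (Sum.map Sum.inl id))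
          (Term.var (Sum.inl (Sum.inr 0)))
  | _, @BoundedFormula.rel _ _ _ 0 R _ => Empty.elim R
  | _, @BoundedFormula.rel _ _ _ (_+2) R _ => Empty.elim R
  | _, BoundedFormula.imp φ ψ => BoundedFormula.imp (trBF c φ) (trBF c ψ)
  | _, BoundedFormula.all φ => BoundedFormula.all (trBF c φ)

lemma elim_comp_map {α β γ : Type*} {p : ℕ} (v : α → γ) (w : β → γ) (xs : Fin p → γ) :
    (Sum.elim (Sum.elim v w) xs) ∘ (Sum.map Sum.inl (id : Fin p → Fin p)) = Sum.elim v xs := by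
  funext x; cases x <;> rfl

lemma realize_trBF (c : ℕ) {M : Type*} [st : (mapLang c).Structure M] (m : M)
    {α : Type*} {n : ℕ} (φ : (mapLang (c+1)).BoundedFormula α n)
    (v : α → M) (xs : Fin n → M) :
    (trBF c φ).Realize (Sum.elim v fun _ => m) xs ↔
      @BoundedFormula.Realize _ M (extStructure c M m) _ _ φ v xs := by
  letI eSt : (mapLang (c+1)).Structure M := extStructure c M m
  induction φ generalizing v with
  | falsum => exact Iff.rfl
  | equal t₁ t₂ =>
    show Term.realize _ _ = Term.realize _ _ ↔ _
    rw [Term.realize_relabel, Term.realize_relabel, elim_comp_map,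
      realize_trTerm c m _ t₁, realize_trTerm c m _ t₂]
    exact Iff.rfl
  | @rel _ l R ts =>
    match l, R, ts with
    | 0, R, _ => exact Empty.elim R
    | (n+2), R, _ => exact Empty.elim R
    | 1, R, ts =>
      have hrel : ∀ w : Fin 1 → M, @Structure.RelMap _ M eSt 1 R w =
          (letI := Classical.propDecidable
           if h : (R : Fin (c+1)).val < c then relP c ⟨(R : Fin (c+1)).val, h⟩ (w 0)
           else w 0 = m) := fun w => rfl
      show (trBF c (BoundedFormula.rel R ts)).Realize _ _ ↔
        @Structure.RelMap _ M eSt 1 R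
          (fun i => @Term.realize _ M eSt _ (Sum.elim v xs) (ts i))
      rw [hrel]
      by_cases h : (R : Fin (c+1)).val < c
      · rw [dif_pos h, show trBF c (BoundedFormula.rel R ts) =
          BoundedFormula.rel (l := 1) (⟨(R : Fin (c+1)).val, h⟩ : Fin c)
            (fun i => (trTerm c (ts i)).relabel (Sum.map Sum.inl id)) from by
              rw [trBF]; exact dif_pos h]
        have key : ∀ i : Fin 1, Term.realize (Sum.elim (Sum.elim v fun _ => m) xs)
            ((trTerm c (ts i)).relabel (Sum.map (@Sum.inl α (Fin 1)) id)) =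
            @Term.realize _ M eSt _ (Sum.elim v xs) (ts i) := by
          intro i; rw [Term.realize_relabel, elim_comp_map, realize_trTerm c m _ (ts i)]
        show Structure.RelMap (L := mapLang c) (M := M) (rsym c ⟨(R : Fin (c+1)).val, h⟩)
            (fun i => Term.realize (L := mapLang c) (Sum.elim (Sum.elim v fun _ => m) xs)
              ((trTerm c (ts i)).relabel (Sum.map (@Sum.inl α (Fin 1)) id))) ↔
          Structure.RelMap (L := mapLang c) (M := M) (rsym c ⟨(R : Fin (c+1)).val, h⟩)
            ![@Term.realize _ M eSt _ (Sum.elim v xs) (ts 0)]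
        exact iff_of_eq (congrArg _ (funext (Fin.cases (key 0) (fun i => i.elim0))))
      · rw [dif_neg h, show trBF c (BoundedFormula.rel R ts) =
          BoundedFormula.equal ((trTerm c (ts 0)).relabel (Sum.map Sum.inl id))
            (Term.var (Sum.inl (Sum.inr 0))) from by
              rw [trBF]; exact dif_neg h]
        show Term.realize _ _ = Term.realize _ _ ↔ _
        rw [Term.realize_relabel, elim_comp_map, realize_trTerm c m _ (ts 0)]
        exact Iff.rfl
  | imp φ ψ ihφ ihψ =>
    rw [show trBF c (φ.imp ψ) = (trBF c φ).imp (trBF c ψ) from rfl,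
      BoundedFormula.realize_imp, BoundedFormula.realize_imp]
    exact imp_congr (ihφ v xs) (ihψ v xs)
  | all φ ih =>
    rw [show trBF c φ.all = (trBF c φ).all from rfl,
      BoundedFormula.realize_all, BoundedFormula.realize_all]
    exact forall_congr' fun a => ih v (Fin.snoc xs a)


/-- Inclusion of `mapLang c` into `mapLang (c+1)`. -/
def incLHom (c : ℕ) : mapLang c →ᴸ mapLang (c+1) where
  onFunction := fun {n} f => match n, f with
    | 1, f => f
    | 0, f => Empty.elim f
    | (_+2), f => Empty.elim f
  onRelation := fun {n} R => match n, R with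
    | 1, R => Fin.castSucc R
    | 0, R => Empty.elim R
    | (_+2), R => Empty.elim R

lemma inc_isExpansionOn (c : ℕ) (M : Type*) [st : (mapLang c).Structure M] (m : M) :
    @LHom.IsExpansionOn _ _ (incLHom c) M st (extStructure c M m) := by
  letI eSt : (mapLang (c+1)).Structure M := extStructure c M m
  constructor
  · intro n f x
    match n, f with
    | 0, f => exact Empty.elim f
    | (_+2), f => exact Empty.elim f
    | 1, f =>
      show Structure.funMap (L := mapLang c) (fsym c) ![x 0] = Structure.funMap f x
      exact congrArg _ (fin1_eq x).symm
  · intro n R x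
    match n, R with
    | 0, R => exact Empty.elim R
    | (_+2), R => exact Empty.elim R
    | 1, R =>
      have hrel : @Structure.RelMap _ M eSt 1 (Fin.castSucc R) x =
          (letI := Classical.propDecidable
           if h : (Fin.castSucc R : Fin (c+1)).val < c then
             relP c ⟨(Fin.castSucc R : Fin (c+1)).val, h⟩ (x 0)
           else x 0 = m) := rfl
      show @Structure.RelMap _ M eSt 1 (Fin.castSucc R) x = Structure.RelMap R x
      rw [hrel, dif_pos (show ((Fin.castSucc R : Fin (c+1)) : ℕ) < c from R.isLt)]
      show Structure.RelMap (L := mapLang c) (M := M) R ![x 0] = Structure.RelMap R x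
      exact congrArg _ (fin1_eq x).symm

/-- Marking exactly one element of a mapping modeling with a new unary
relation yields a modeling; moreover the marked structure satisfies the FMTP iff the original
one does, and has the finite model property iff the original one does. -/
theorem marking_one_element (c : ℕ) (M : MMod c) (m : M.carrier) :
    @IsModeling (c + 1) M.carrier M.ms (extStructure c M.carrier m) ∧
    (FMTP (@fmap (c + 1) M.carrier (extStructure c M.carrier m)) M.ν ↔
      FMTP (fmap c M.carrier) M.ν) ∧
    (@HasFMP (c + 1) M.carrier (extStructure c M.carrier m) ↔ HasFMP c M.carrier) := by
  classical
  letI eSt : (mapLang (c + 1)).Structure M.carrier := extStructure c M.carrier m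
  have hfe : @fmap (c + 1) M.carrier eSt = fmap c M.carrier := rfl
  refine ⟨?_, by rw [hfe], ?_⟩
  · -- modeling
    intro p φ
    let g : (Fin p ⊕ Fin 1) → Fin (p + 1) := Sum.elim Fin.castSucc (fun _ => Fin.last p)
    let ψ : (mapLang c).Formula (Fin (p + 1)) := Formula.relabel g (trBF c φ)
    have he : Measurable (fun u : Fin p → M.carrier => (Fin.snoc u m : Fin (p+1) → M.carrier)) := by
      apply measurable_pi_lambda
      intro j
      refine Fin.lastCases ?_ ?_ j
      · simp only [Fin.snoc_last]; exact measurable_const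
      · intro i; simp only [Fin.snoc_castSucc]; exact measurable_pi_apply i
    have hset : {v : Fin p → M.carrier | @Formula.Realize _ M.carrier eSt _ φ v} =
        (fun u : Fin p → M.carrier => (Fin.snoc u m : Fin (p+1) → M.carrier)) ⁻¹'
          {w : Fin (p+1) → M.carrier | ψ.Realize w} := by
      ext u
      simp only [Set.mem_setOf_eq, Set.mem_preimage]
      rw [show ψ.Realize (Fin.snoc u m) ↔
          (trBF c φ).Realize ((Fin.snoc u m : Fin (p+1) → M.carrier) ∘ g) default from
        Formula.realize_relabel]
      have hcomp : (Fin.snoc u m : Fin (p+1) → M.carrier) ∘ g =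
          Sum.elim u (fun _ => m) := by
        funext x
        cases x with
        | inl i => simp [g, Fin.snoc_castSucc]
        | inr i => simp [g, Fin.snoc_last]
      rw [hcomp, realize_trBF c m φ u default]
      exact Iff.rfl
    rw [hset]
    exact he (M.borel (p + 1) ψ)
  · -- finite model property
    have key : ∀ (N : Type) [stN : (mapLang c).Structure N] (θ : (mapLang (c+1)).Sentence)
        (a : N) (v0 : Empty → N) (xs1 : Fin (1 + 0) → N), xs1 0 = a →
        ((BoundedFormula.relabel (id : Empty ⊕ Fin 1 → Empty ⊕ Fin 1) (trBF c θ)).Realize v0 xs1 ↔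
          @Sentence.Realize _ N (extStructure c N a) θ) := by
      intro N stN θ a v0 xs1 hx
      letI : (mapLang (c+1)).Structure N := extStructure c N a
      rw [BoundedFormula.realize_relabel]
      have h1 : (Sum.elim v0 (xs1 ∘ Fin.castAdd 0) ∘ (id : Empty ⊕ Fin 1 → Empty ⊕ Fin 1)) =
          Sum.elim v0 (fun _ => a) := by
        funext x
        cases x with
        | inl e => exact e.elim
        | inr i =>
          show xs1 (Fin.castAdd 0 i) = a
          rw [show Fin.castAdd 0 i = (0 : Fin (1 + 0)) from by
            apply Fin.ext; omega]
          exact hx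
      rw [h1, realize_trBF c a θ v0 (xs1 ∘ Fin.natAdd 1)]
      constructor
      · intro h
        rw [Sentence.Realize, Formula.Realize,
          show (default : Empty → N) = v0 from funext (fun e => e.elim),
          Subsingleton.elim (default : Fin 0 → N) (xs1 ∘ Fin.natAdd 1)]
        exact h
      · intro h
        rw [show v0 = (default : Empty → N) from funext (fun e => e.elim),
          Subsingleton.elim (xs1 ∘ Fin.natAdd 1) (default : Fin 0 → N)]
        exact h
    constructor
    · -- ext FMP → orig FMP
      intro hext θ hθ
      haveI := inc_isExpansionOn c M.carrier m
      have h1 : @Sentence.Realize _ M.carrier eSt ((incLHom c).onSentence θ) :=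
        (LHom.realize_onSentence M.carrier (incLHom c) θ).mpr hθ
      obtain ⟨F, stF, hF, hreal⟩ := hext _ h1
      letI := stF
      letI rSt := (incLHom c).reduct F
      refine ⟨F, rSt, hF, ?_⟩
      exact (LHom.realize_onSentence F (incLHom c) θ).mp hreal
    · -- orig FMP → ext FMP
      intro horig θ hθ
      let χ : (mapLang c).BoundedFormula Empty 1 :=
        BoundedFormula.relabel (id : Empty ⊕ Fin 1 → Empty ⊕ Fin 1) (trBF c θ)
      have hM : Sentence.Realize M.carrier χ.ex := by
        rw [Sentence.Realize, Formula.Realize, BoundedFormula.realize_ex]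
        refine ⟨m, ?_⟩
        refine (key M.carrier θ m default (Fin.snoc default m) ?_).mpr hθ
        simp [Fin.snoc]
      obtain ⟨F, stF, hF, hreal⟩ := horig χ.ex hM
      letI := stF
      rw [Sentence.Realize, Formula.Realize, BoundedFormula.realize_ex] at hreal
      obtain ⟨a, ha⟩ := hreal
      refine ⟨F, extStructure c F a, hF, ?_⟩
      refine (key F θ a default (Fin.snoc default a) ?_).mp ha
      simp [Fin.snoc]


end MapApprox
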